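/- Every square in the infinite Tribonacci word T has order T_n or T_n + T_{n-1} for some n ≥ 2; that is, if there exist i and m > 0 with T[i+t] = T[i+m+t] for all 0 ≤ t < m, then m = T_n or m = T_n + T_{n-1} for some n ≥ 2. -/

import Mathlib

/-- The Tribonacci morphism: 0 → 01, 1 → 02, 2 → 0. -/
def tribMap (c : ℕ) : List ℕ := if c = 0 then [0,1] else if c = 1 then [0,2] else [0]

/-- Iterates of the Tribonacci morphism on the word `0`. -/
def tribIter : ℕ → List ℕ
  | 0 => [0]
  | k+1 => (tribIter k).flatMap tribMap

/-- The infinite Tribonacci word, the fixed point starting with 0 of 0→01, 1→02, 2→0. -/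
def tribWord (n : ℕ) : ℕ := (tribIter (n+1)).getD n 0

/-- The Tribonacci numbers. -/
def trib : ℕ → ℕ
  | 0 => 0
  | 1 => 1
  | 2 => 1
  | n+3 => trib (n+2) + trib (n+1) + trib n

namespace TW

local notation "W" => tribWord

lemma tribMap_ne_nil (a : ℕ) : tribMap a ≠ [] := by
  unfold tribMap; split <;> [skip; split] <;> simp

lemma tribMap_len_le (a : ℕ) : (tribMap a).length ≤ 2 := by
  unfold tribMap; split <;> [skip; split] <;> simp

lemma prefix_flatMap {l₁ l₂ : List ℕ} (h : l₁ <+: l₂) :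
    l₁.flatMap tribMap <+: l₂.flatMap tribMap := by
  obtain ⟨t, rfl⟩ := h
  exact ⟨t.flatMap tribMap, (List.flatMap_append ..).symm⟩

lemma tribIter_prefix_succ (k : ℕ) : tribIter k <+: tribIter (k+1) := by
  induction k with
  | zero => exact ⟨[1], rfl⟩
  | succ k ih => exact prefix_flatMap ih

lemma tribIter_prefix {k k' : ℕ} (h : k ≤ k') : tribIter k <+: tribIter k' := by
  induction k' with
  | zero => simp_all
  | succ k' ih =>
    rcases Nat.eq_or_lt_of_le h with rfl | h
    · exact List.prefix_refl _
    · exact (ih (Nat.lt_succ_iff.mp h)).trans (tribIter_prefix_succ k')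

lemma length_le_flatMap (l : List ℕ) : l.length ≤ (l.flatMap tribMap).length := by
  induction l with
  | nil => simp
  | cons a l ih =>
    rw [List.flatMap_cons, List.length_append]
    have := List.length_pos_iff.mpr (tribMap_ne_nil a)
    simp only [List.length_cons]
    omega

lemma tribIter_cons (k : ℕ) : ∃ t, tribIter k = 0 :: t := by
  induction k with
  | zero => exact ⟨[], rfl⟩
  | succ k ih =>
    obtain ⟨t, ht⟩ := ih
    exact ⟨1 :: t.flatMap tribMap, by rw [show tribIter (k+1) = (tribIter k).flatMap tribMap from rfl, ht]; rfl⟩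

lemma length_tribIter (k : ℕ) : k + 1 ≤ (tribIter k).length := by
  induction k with
  | zero => simp [tribIter]
  | succ k ih =>
    obtain ⟨t, ht⟩ := tribIter_cons k
    have : (tribIter (k+1)).length = 2 + (t.flatMap tribMap).length := by
      rw [show tribIter (k+1) = (tribIter k).flatMap tribMap from rfl, ht,
        List.flatMap_cons, List.length_append]; rfl
    have h2 := length_le_flatMap t
    have : t.length + 1 = (tribIter k).length := by rw [ht]; simp
    omega

lemma getD_prefix {l₁ l₂ : List ℕ} (h : l₁ <+: l₂) {n : ℕ} (hn : n < l₁.length) (d : ℕ) :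
    l₂.getD n d = l₁.getD n d := by
  obtain ⟨t, rfl⟩ := h
  rw [List.getD_eq_getElem _ _ hn, List.getD_eq_getElem _ _ (by simp; omega),
    List.getElem_append_left hn]

lemma tribWord_agree {n k : ℕ} (hn : n < (tribIter k).length) :
    (tribIter k).getD n 0 = W n := by
  unfold tribWord
  rcases le_total k (n+1) with h | h
  · exact (getD_prefix (tribIter_prefix h) hn 0).symm
  · exact getD_prefix (tribIter_prefix h) (lt_of_lt_of_le (Nat.lt_succ_self n) (le_trans (by omega) (length_tribIter (n+1)))) 0

lemma mem_tribIter_lt3 {x : ℕ} {k : ℕ} (h : x ∈ tribIter k) : x < 3 := by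
  induction k with
  | zero => simp [tribIter] at h; omega
  | succ k ih =>
    rw [show tribIter (k+1) = (tribIter k).flatMap tribMap from rfl] at h
    simp only [List.mem_flatMap] at h
    obtain ⟨a, _, hx⟩ := h
    unfold tribMap at hx
    split at hx <;> [skip; split at hx] <;> simp at hx <;> omega

lemma W_lt3 (n : ℕ) : W n < 3 := by
  have hn : n < (tribIter (n+1)).length := lt_of_lt_of_le (Nat.lt_succ_self n) (le_trans (by omega) (length_tribIter (n+1)))
  unfold tribWord
  rw [List.getD_eq_getElem _ _ hn]
  exact mem_tribIter_lt3 (List.getElem_mem _)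


/-- cut positions: `c k` is the starting position of the `k`-th block. -/
def cut : ℕ → ℕ
  | 0 => 0
  | k+1 => cut k + (tribMap (tribWord k)).length

lemma cut_succ (k : ℕ) : cut (k+1) = cut k + (tribMap (W k)).length := rfl

lemma cut_ge (k : ℕ) : k ≤ cut k := by
  induction k with
  | zero => simp
  | succ k ih =>
    have := List.length_pos_iff.mpr (tribMap_ne_nil (W k))
    rw [cut_succ]; omega

lemma cut_lt_succ (k : ℕ) : cut k < cut (k+1) := by
  have := List.length_pos_iff.mpr (tribMap_ne_nil (W k))
  rw [cut_succ]; omega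

lemma cut_strictMono : StrictMono cut := strictMono_nat_of_lt_succ cut_lt_succ

lemma cut_le_add (k s : ℕ) : cut k + s ≤ cut (k + s) := by
  induction s with
  | zero => simp
  | succ s ih =>
    have := cut_lt_succ (k+s)
    have e : k + (s+1) = k + s + 1 := by omega
    rw [e]; omega

lemma flatMap_take_len {k K : ℕ} (h : k ≤ (tribIter K).length) :
    (((tribIter K).take k).flatMap tribMap).length = cut k := by
  induction k with
  | zero => simp [cut]
  | succ k ih =>
    have hk : k < (tribIter K).length := h
    have htake : (tribIter K).take (k+1) = (tribIter K).take k ++ [(tribIter K)[k]] := by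
      rw [List.take_succ]
      simp [List.getElem?_eq_getElem hk]
    have hget : (tribIter K)[k] = W k := by
      rw [← tribWord_agree hk, List.getD_eq_getElem _ _ hk]
    rw [htake, List.flatMap_append, List.length_append, ih (le_of_lt hk), hget, cut_succ]
    simp

/-- The fundamental block lemma. -/
lemma block (k : ℕ) {j : ℕ} (hj : j < (tribMap (W k)).length) :
    W (cut k + j) = (tribMap (W k)).getD j 0 := by
  set K := cut (k+1) with hK
  have hlen : K + 1 ≤ (tribIter K).length := length_tribIter K
  have hkK : k + 1 ≤ (tribIter K).length := by
    have h1 : k + 1 ≤ cut (k+1) := cut_ge (k+1)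
    omega
  -- decompose tribIter (K+1)
  have hsplit : tribIter (K+1) =
      (((tribIter K).take k).flatMap tribMap) ++ (tribMap (W k) ++ ((tribIter K).drop (k+1)).flatMap tribMap) := by
    have hk : k < (tribIter K).length := hkK
    have hget : (tribIter K)[k] = W k := by
      rw [← tribWord_agree hk, List.getD_eq_getElem _ _ hk]
    have h1 : tribIter (K+1) = ((tribIter K).take (k+1)).flatMap tribMap ++ ((tribIter K).drop (k+1)).flatMap tribMap := by
      conv_lhs => rw [show tribIter (K+1) = (tribIter K).flatMap tribMap from rfl,
        ← List.take_append_drop (k+1) (tribIter K)]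
      rw [List.flatMap_append]
    have h2 : ((tribIter K).take (k+1)).flatMap tribMap = ((tribIter K).take k).flatMap tribMap ++ tribMap (W k) := by
      rw [List.take_succ, List.getElem?_eq_getElem hk, List.flatMap_append, hget]
      simp
    rw [h1, h2, List.append_assoc]
  have hlen1 : (((tribIter K).take k).flatMap tribMap).length = cut k :=
    flatMap_take_len (by omega)
  have hidx : cut k + j < (tribIter (K+1)).length := by
    have h1 : cut k + j < cut (k+1) := by rw [cut_succ]; omega
    have h2 : (tribIter K).length ≤ (tribIter (K+1)).length :=
      (tribIter_prefix_succ K).length_le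
    omega
  rw [← tribWord_agree hidx, hsplit]
  rw [List.getD_append_right _ _ _ _ (by omega), hlen1, Nat.add_sub_cancel_left]
  rw [List.getD_append _ _ _ _ hj]

lemma W_cases (k : ℕ) : W k = 0 ∨ W k = 1 ∨ W k = 2 := by
  have := W_lt3 k; omega

lemma W_cut (k : ℕ) : W (cut k) = 0 := by
  have h := block k (j := 0) (List.length_pos_iff.mpr (tribMap_ne_nil (W k)))
  rcases W_cases k with h0 | h0 | h0 <;> rw [h0] at h <;> simpa [tribMap] using h

lemma cut_gap (k : ℕ) : cut (k+1) = cut k + (if W k = 2 then 1 else 2) := by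
  rw [cut_succ]
  rcases W_cases k with h0 | h0 | h0 <;> rw [h0] <;> simp [tribMap]

lemma second_letter0 (k : ℕ) (h : W k = 0) : W (cut k + 1) = 1 := by
  have hb := block k (j := 1) (by rw [h]; simp [tribMap])
  rw [h] at hb; simpa [tribMap] using hb

lemma second_letter1 (k : ℕ) (h : W k = 1) : W (cut k + 1) = 2 := by
  have hb := block k (j := 1) (by rw [h]; simp [tribMap])
  rw [h] at hb; simpa [tribMap] using hb

lemma gap1_letter {k : ℕ} (h : cut (k+1) = cut k + 1) : W k = 2 := by
  rcases W_cases k with h0 | h0 | h0 <;> [skip; skip; exact h0] <;>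
    (rw [cut_gap, h0] at h; simp at h)

lemma letter2_gap {k : ℕ} (h : W k = 2) : cut (k+1) = cut k + 1 := by
  rw [cut_gap, h]; simp

lemma gap_ite (k : ℕ) :
    cut (k+1) = if W (cut k + 1) = 0 then cut k + 1 else cut k + 2 := by
  rcases W_cases k with h0 | h0 | h0
  · rw [cut_gap, h0, second_letter0 k h0]; simp
  · rw [cut_gap, h0, second_letter1 k h0]; simp
  · rw [letter2_gap h0]
    have : W (cut k + 1) = 0 := by rw [← letter2_gap h0]; exact W_cut (k+1)
    simp [this]

/-- gaps and second letters determine the desubstituted letter. -/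
lemma letter_det {k k' : ℕ}
    (hg : cut (k+1) - cut k = cut (k'+1) - cut k')
    (hl : W (cut k + 1) = W (cut k' + 1)) : W k = W k' := by
  have g1 := cut_gap k
  have g2 := cut_gap k'
  rcases W_cases k with h0 | h0 | h0 <;> rcases W_cases k' with h1 | h1 | h1 <;>
    rw [h0] at g1 <;> rw [h1] at g2 <;> simp at g1 g2 <;> try omega
  · rw [second_letter0 k h0, second_letter1 k' h1] at hl; omega
  · rw [second_letter1 k h0, second_letter0 k' h1] at hl; omega

lemma cover (p : ℕ) : ∃ k, cut k ≤ p ∧ p < cut (k+1) := by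
  induction p with
  | zero => exact ⟨0, by simp [cut], cut_lt_succ 0⟩
  | succ p ih =>
    obtain ⟨k, h1, h2⟩ := ih
    by_cases h : p + 1 < cut (k+1)
    · exact ⟨k, by omega, h⟩
    · refine ⟨k+1, by omega, ?_⟩
      have := cut_lt_succ (k+1)
      have := cut_gap k
      omega

lemma zero_iff_cut {p : ℕ} : W p = 0 ↔ ∃ k, cut k = p := by
  constructor
  · intro h
    obtain ⟨k, h1, h2⟩ := cover p
    rcases Nat.eq_or_lt_of_le h1 with he | hlt
    · exact ⟨k, he⟩
    · exfalso
      have hgap := cut_gap k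
      have hp : p = cut k + 1 := by split at hgap <;> omega
      rcases W_cases k with h0 | h0 | h0
      · rw [hp, second_letter0 k h0] at h; omega
      · rw [hp, second_letter1 k h0] at h; omega
      · rw [letter2_gap h0] at h2; omega
  · rintro ⟨k, rfl⟩; exact W_cut k

lemma nz_struct {p : ℕ} (h : W p ≠ 0) :
    ∃ k, p = cut k + 1 ∧ cut (k+1) = cut k + 2 := by
  obtain ⟨k, h1, h2⟩ := cover p
  have hgap := cut_gap k
  have hne : cut k ≠ p := fun he => h (he ▸ W_cut k)
  have hp : p = cut k + 1 := by split at hgap <;> omega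
  refine ⟨k, hp, ?_⟩
  split at hgap
  · exfalso
    next h2' =>
    have := W_cut (k+1)
    rw [hgap] at this
    rw [hp] at h
    exact h this
  · omega

lemma nz_succ {p : ℕ} (h : W p ≠ 0) : W (p+1) = 0 := by
  obtain ⟨k, hp, hg⟩ := nz_struct h
  have : p + 1 = cut (k+1) := by omega
  rw [this]; exact W_cut (k+1)

lemma W_zero : W 0 = 0 := W_cut 0

lemma nz_pred {p : ℕ} (h : W p ≠ 0) : 1 ≤ p ∧ W (p-1) = 0 := by
  obtain ⟨k, hp, _⟩ := nz_struct h
  constructor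
  · omega
  · have : p - 1 = cut k := by omega
    rw [this]; exact W_cut k

lemma cut_lt_iff {a b : ℕ} : cut a < cut b ↔ a < b := cut_strictMono.lt_iff_lt

lemma cut_le_iff {a b : ℕ} : cut a ≤ cut b ↔ a ≤ b := cut_strictMono.le_iff_le

/-! ### Parikh vectors -/

def cnt (a i m : ℕ) : ℕ := ∑ t ∈ Finset.range m, if W (i+t) = a then 1 else 0

def pk (i m : ℕ) : ℕ × ℕ × ℕ := (cnt 0 i m, cnt 1 i m, cnt 2 i m)

def Asq (p : ℕ × ℕ × ℕ) : ℕ × ℕ × ℕ := (p.1 + p.2.1 + p.2.2, p.1, p.2.1)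

lemma cnt_succ (a i m : ℕ) : cnt a i (m+1) = cnt a i m + if W (i+m) = a then 1 else 0 :=
  Finset.sum_range_succ _ _

lemma cnt_add (a i x y : ℕ) : cnt a i (x+y) = cnt a i x + cnt a (i+x) y := by
  induction y with
  | zero => simp [cnt]
  | succ y ih =>
    have e : x + (y+1) = (x+y) + 1 := by omega
    rw [e, cnt_succ, ih, cnt_succ, show i + (x+y) = i+x+y by omega]
    omega

lemma pk_add (i x y : ℕ) : pk i (x+y) = pk i x + pk (i+x) y := by
  simp [pk, cnt_add, Prod.ext_iff]

lemma pk_zero (i : ℕ) : pk i 0 = 0 := by simp [pk, cnt]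

lemma cnt_one (a p : ℕ) : cnt a p 1 = if W p = a then 1 else 0 := by
  have h : cnt a p 1 = cnt a p 0 + if W (p+0) = a then 1 else 0 := cnt_succ a p 0
  simpa [cnt] using h

lemma pk_one (p : ℕ) :
    pk p 1 = (if W p = 0 then 1 else 0, if W p = 1 then 1 else 0, if W p = 2 then 1 else 0) := by
  simp [pk, cnt_one]

lemma pk_succ (i m : ℕ) : pk i (m+1) = pk i m + pk (i+m) 1 := pk_add i m 1

lemma cnt_sum (i m : ℕ) : cnt 0 i m + cnt 1 i m + cnt 2 i m = m := by
  induction m with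
  | zero => simp [cnt]
  | succ m ih =>
    rw [cnt_succ, cnt_succ, cnt_succ]
    rcases W_cases (i+m) with h | h | h <;> simp [h] <;> omega

lemma cnt_pos {a i m t : ℕ} (ht : t < m) (h : W (i+t) = a) : 1 ≤ cnt a i m := by
  have hle := Finset.single_le_sum (f := fun x => if W (i+x) = a then (1:ℕ) else 0)
    (fun _ _ => Nat.zero_le _) (Finset.mem_range.mpr ht)
  simpa [cnt, h] using hle

lemma Asq_add (p q : ℕ × ℕ × ℕ) : Asq (p + q) = Asq p + Asq q := by
  obtain ⟨a, b, c⟩ := p; obtain ⟨d, e, f⟩ := q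
  simp [Asq, Prod.ext_iff]; omega

/-- the key Parikh transfer lemma: the Parikh vector of a union of blocks. -/
lemma pk_blocks (k j : ℕ) : pk (cut k) (cut (k+j) - cut k) = Asq (pk k j) := by
  induction j with
  | zero => simp [pk_zero, Asq]; rfl
  | succ j ih =>
    have hmono : cut k ≤ cut (k+j) := cut_le_iff.mpr (by omega)
    have hmono2 : cut (k+j) ≤ cut (k+j+1) := le_of_lt (cut_lt_succ _)
    have e1 : k + (j+1) = (k+j)+1 := by omega
    have e2 : cut ((k+j)+1) - cut k =
        (cut (k+j) - cut k) + (cut ((k+j)+1) - cut (k+j)) := by omega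
    rw [e1, e2, pk_add, ih]
    have e3 : cut k + (cut (k+j) - cut k) = cut (k+j) := by omega
    rw [e3, pk_succ k j, Asq_add]
    congr 1
    -- remaining: Parikh of block j equals Asq of its letter
    have h0 : W (cut (k+j)) = 0 := W_cut (k+j)
    rcases W_cases (k+j) with h | h | h
    · have hg : cut ((k+j)+1) = cut (k+j) + 2 := by rw [cut_gap, h]; simp
      have h1 : W (cut (k+j) + 1) = 1 := second_letter0 _ h
      rw [hg]
      have e : cut (k+j) + 2 - cut (k+j) = 1 + 1 := by omega
      rw [e, pk_add, pk_one, pk_one, pk_one, h0, h1, h]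
      simp [Asq]
    · have hg : cut ((k+j)+1) = cut (k+j) + 2 := by rw [cut_gap, h]; simp
      have h1 : W (cut (k+j) + 1) = 2 := second_letter1 _ h
      rw [hg]
      have e : cut (k+j) + 2 - cut (k+j) = 1 + 1 := by omega
      rw [e, pk_add, pk_one, pk_one, pk_one, h0, h1, h]
      simp [Asq]
    · have hg : cut ((k+j)+1) = cut (k+j) + 1 := letter2_gap h
      rw [hg]
      have e : cut (k+j) + 1 - cut (k+j) = 1 := by omega
      rw [e, pk_one, pk_one, h0, h]
      simp [Asq]

/-- rotating a factor whose boundary letters are both 0 does not change the Parikh vector -/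
lemma pk_rot {i m : ℕ} (h0 : W i = 0) (h1 : W (i+m) = 0) : pk i m = pk (i+1) m := by
  have e1 : pk i (m+1) = pk i m + pk (i+m) 1 := pk_succ i m
  have e2 : pk i (m+1) = pk i 1 + pk (i+1) m := by
    rw [show m+1 = 1+m by omega]; exact pk_add i 1 m
  rw [pk_one, h1] at e1
  rw [pk_one, h0] at e2
  norm_num at e1 e2
  have h3 := e1.symm.trans e2
  rw [add_comm (pk i m)] at h3
  exact add_left_cancel h3

/-! ### The good Parikh vectors -/

def Vv (n : ℕ) : ℕ × ℕ × ℕ := (trib (n+1), trib n, trib (n-1))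

def GoodS (p : ℕ × ℕ × ℕ) : Prop := ∃ n, p = Vv n ∨ p = Vv (n+1) + Vv n

def GoodN (p : ℕ × ℕ × ℕ) : Prop :=
  GoodS p ∨ p = ((0:ℕ),(1:ℕ),(0:ℕ)) ∨ p = ((0:ℕ),(0:ℕ),(1:ℕ)) ∨ p = ((1:ℕ),(0:ℕ),(1:ℕ))

lemma trib_sum (n : ℕ) : trib (n+1) + trib n + trib (n-1) = trib (n+2) := by
  cases n with
  | zero => simp [trib]
  | succ s => show trib (s+2) + trib (s+1) + trib s = trib (s+3); rw [trib]

lemma Asq_Vv (n : ℕ) : Asq (Vv n) = Vv (n+1) := by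
  have h := trib_sum n
  simp only [Asq, Vv, Nat.add_sub_cancel]
  rw [h]

lemma Vv_zero : Vv 0 = ((1:ℕ),(0:ℕ),(0:ℕ)) := by
  simp [Vv, trib]

lemma Vv_one : Vv 1 = ((1:ℕ),(1:ℕ),(0:ℕ)) := by
  simp [Vv, trib]

lemma GoodS_Asq {p : ℕ × ℕ × ℕ} (h : GoodS p) : GoodS (Asq p) := by
  obtain ⟨n, h | h⟩ := h
  · exact ⟨n+1, Or.inl (by rw [h, Asq_Vv])⟩
  · exact ⟨n+1, Or.inr (by rw [h, Asq_add, Asq_Vv, Asq_Vv])⟩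

lemma GoodN_Asq {p : ℕ × ℕ × ℕ} (h : GoodN p) : GoodN (Asq p) := by
  rcases h with h | h | h | h
  · exact Or.inl (GoodS_Asq h)
  · right; right; right; rw [h]; simp [Asq]
  · left; exact ⟨0, Or.inl (by rw [h, Vv_zero]; simp [Asq])⟩
  · left; exact ⟨0, Or.inr (by rw [h, Vv_zero, Vv_one]; simp [Asq, Prod.ext_iff])⟩

lemma GoodN_Asq_of_two {p : ℕ × ℕ × ℕ} (h : GoodN p) (h2 : 1 ≤ p.2.2) : GoodS (Asq p) := by
  rcases h with h | h | h | h
  · exact GoodS_Asq h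
  · rw [h] at h2; simp at h2
  · exact ⟨0, Or.inl (by rw [h, Vv_zero]; simp [Asq])⟩
  · exact ⟨0, Or.inr (by rw [h, Vv_zero, Vv_one]; simp [Asq, Prod.ext_iff])⟩

lemma GoodS_order {i m : ℕ} (h : GoodS (pk i m)) :
    ∃ n ≥ 2, m = trib n ∨ m = trib n + trib (n-1) := by
  have hsum : (pk i m).1 + (pk i m).2.1 + (pk i m).2.2 = m := cnt_sum i m
  obtain ⟨n, h | h⟩ := h
  · refine ⟨n+2, by omega, Or.inl ?_⟩
    rw [h] at hsum
    simp only [Vv] at hsum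
    rw [← hsum, trib_sum]
  · rw [h] at hsum
    simp only [Vv, Prod.fst_add, Prod.snd_add, Nat.add_sub_cancel, show n+1+1 = n+2 from rfl] at hsum
    refine ⟨n+3, by omega, Or.inr ?_⟩
    have h3 : n + 3 - 1 = n + 2 := by omega
    rw [h3]
    have e1 := trib_sum n
    have e2 := trib_sum (n+1)
    simp only [Nat.add_sub_cancel, show n+1+1 = n+2 from rfl, show n+1+2 = n+3 from rfl] at e2
    omega

/-! ### The core desubstitution lemma -/

lemma letter_det2 {j j' : ℕ} (h : W j = W j') : W (cut j + 1) = W (cut j' + 1) := by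
  rcases W_cases j with h0 | h0 | h0
  · rw [second_letter0 j h0, second_letter0 j' (h ▸ h0)]
  · rw [second_letter1 j h0, second_letter1 j' (h ▸ h0)]
  · have g1 := letter2_gap h0
    have g2 := letter2_gap (h ▸ h0 : W j' = 2)
    rw [show cut j + 1 = cut (j+1) by omega, show cut j' + 1 = cut (j'+1) by omega,
      W_cut, W_cut]

section Core

variable {i m k m₁ r : ℕ}

lemma core_cuts (hck : cut k = i) (hck2 : cut (k + m₁) = i + m)
    (hmatch : ∀ t, t < r → W (i+t) = W (i+m+t))
    (hbound : cut (k + (m₁-1)) < i + r) (hm₁ : 1 ≤ m₁) :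
    ∀ s, s ≤ m₁ - 1 → cut (k + m₁ + s) = cut (k + s) + m := by
  intro s
  induction s with
  | zero => intro _; simpa [hck] using hck2
  | succ s ihs =>
    intro hs1
    have hs : s ≤ m₁ - 1 := by omega
    have ih := ihs hs
    set p := cut (k+s) with hp
    have hple : p + 1 ≤ cut (k + (m₁ - 1)) := by
      have h1 : p < cut (k+s+1) := cut_lt_succ (k+s)
      have h2 : cut (k+s+1) ≤ cut (k+(m₁-1)) := cut_le_iff.mpr (by omega)
      omega
    have hpi : i ≤ p := by rw [← hck, hp]; exact cut_le_iff.mpr (by omega)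
    have hprobe : W (p + m + 1) = W (p + 1) := by
      have ht := hmatch (p + 1 - i) (by omega)
      rw [show i + (p + 1 - i) = p + 1 by omega, show i + m + (p + 1 - i) = p + m + 1 by omega] at ht
      exact ht.symm
    have g1 := gap_ite (k+s)
    have g2 := gap_ite (k+m₁+s)
    rw [show cut (k+m₁+s) = p + m from ih, show p + m + 1 = p + (m+1) by omega] at g2
    rw [show p + (m+1) = p + m + 1 by omega, hprobe] at g2
    rw [show k + m₁ + (s+1) = k + m₁ + s + 1 by omega, g2,
        show k + (s+1) = k + s + 1 by omega, g1]
    split <;> omega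

lemma core_letters (hck : cut k = i) (hck2 : cut (k + m₁) = i + m)
    (hmatch : ∀ t, t < r → W (i+t) = W (i+m+t))
    (hbound : cut (k + (m₁-1)) < i + r) (hm₁ : 1 ≤ m₁) :
    ∀ s, s + 2 ≤ m₁ → W (k + m₁ + s) = W (k + s) := by
  intro s hs
  have A := core_cuts hck hck2 hmatch hbound hm₁
  have a1 : cut (k + m₁ + s) = cut (k + s) + m := A s (by omega)
  have a2 : cut (k + m₁ + (s+1)) = cut (k + (s+1)) + m := A (s+1) (by omega)
  have hg : cut (k + m₁ + s + 1) - cut (k + m₁ + s) = cut (k + s + 1) - cut (k + s) := by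
    rw [show k + m₁ + s + 1 = k + m₁ + (s+1) by omega, a1, a2,
      show k + (s+1) = k + s + 1 by omega]
    omega
  have hple : cut (k+s) + 1 ≤ cut (k + (m₁ - 1)) := by
    have h1 : cut (k+s) < cut (k+s+1) := cut_lt_succ (k+s)
    have h2 : cut (k+s+1) ≤ cut (k+(m₁-1)) := cut_le_iff.mpr (by omega)
    omega
  have hpi : i ≤ cut (k+s) := by rw [← hck]; exact cut_le_iff.mpr (by omega)
  have hprobe : W (cut (k + m₁ + s) + 1) = W (cut (k + s) + 1) := by
    rw [a1]
    have ht := hmatch (cut (k+s) + 1 - i) (by omega)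
    rw [show i + (cut (k+s) + 1 - i) = cut (k+s) + 1 by omega,
        show i + m + (cut (k+s) + 1 - i) = cut (k+s) + m + 1 by omega] at ht
    exact ht.symm
  exact letter_det hg hprobe

end Core

/-! ### Setup: aligning a repetition to cuts -/

lemma setup {i m : ℕ} (hm : 2 ≤ m) (hWi : W i = 0) (hW0m : W (i+m) = 0) :
    ∃ k m₁, cut k = i ∧ cut (k+m₁) = i+m ∧ 1 ≤ m₁ ∧ m₁ < m ∧ pk i m = Asq (pk k m₁) := by
  obtain ⟨k, hk⟩ := zero_iff_cut.mp hWi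
  obtain ⟨k2, hk2⟩ := zero_iff_cut.mp hW0m
  have hlt : k < k2 := cut_lt_iff.mp (by rw [hk, hk2]; omega)
  have hke : cut (k + (k2-k)) = i + m := by rw [show k + (k2-k) = k2 by omega, hk2]
  refine ⟨k, k2 - k, hk, hke, by omega, ?_, ?_⟩
  · -- m₁ < m
    by_contra h
    push_neg at h
    have h1 : cut k + (k2 - k) ≤ cut (k + (k2-k)) := cut_le_add k (k2-k)
    have hm₁m : k2 - k = m := by rw [hke, hk] at h1; omega
    have e1 : cut (k+1) = cut k + 1 := by
      have l1 : cut k + 1 ≤ cut (k+1) := cut_le_add k 1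
      have l2 : cut (k+1) + (k2-k-1) ≤ cut (k+1+(k2-k-1)) := cut_le_add _ _
      rw [show k+1+(k2-k-1) = k + (k2-k) by omega, hke] at l2
      omega
    have e2 : cut (k+1+1) = cut k + 2 := by
      have l1 : cut (k+1) + 1 ≤ cut (k+1+1) := cut_le_add (k+1) 1
      have l2 : cut (k+1+1) + (k2-k-2) ≤ cut (k+1+1+(k2-k-2)) := cut_le_add _ _
      rw [show k+1+1+(k2-k-2) = k + (k2-k) by omega, hke] at l2
      omega
    have w1 : W k = 2 := gap1_letter e1
    have w2 : W (k+1) = 2 := gap1_letter (by omega)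
    have := nz_succ (show W k ≠ 0 by omega)
    omega
  · have hb := pk_blocks k (k2-k)
    rw [hke, hk, show i+m-i = m by omega] at hb
    exact hb

/-- when the last letter of the first copy is 0, it is the last cut of the first copy. -/
lemma last_cut_zero {i m k m₁ : ℕ} (hck : cut k = i) (hck2 : cut (k+m₁) = i+m)
    (hm : 2 ≤ m) (hx : W (i+(m-1)) = 0) :
    cut (k+(m₁-1)) = i+(m-1) ∧ 2 ≤ m₁ ∧ W (k+(m₁-1)) = 2 := by
  obtain ⟨j, hj⟩ := zero_iff_cut.mp hx
  have hj1 : j < k+m₁ := cut_lt_iff.mp (by rw [hj, hck2]; omega)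
  have hj2 : k < j := cut_lt_iff.mp (by rw [hj, hck]; omega)
  have hm₁2 : 2 ≤ m₁ := by omega
  have hle : cut j ≤ cut (k+(m₁-1)) := cut_le_iff.mpr (by omega)
  have hlt : cut (k+(m₁-1)) < cut (k+m₁) := cut_lt_iff.mpr (by omega)
  have hc1 : cut (k+(m₁-1)) = i+(m-1) := by rw [hck2] at hlt; rw [hj] at hle; omega
  refine ⟨hc1, hm₁2, gap1_letter ?_⟩
  rw [show k+(m₁-1)+1 = k+m₁ by omega, hck2, hc1]
  omega

/-- when the last letter of the first copy is not 0, the last block has length 2. -/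
lemma last_cut_nonzero {i m k m₁ : ℕ} (hck : cut k = i) (hck2 : cut (k+m₁) = i+m)
    (hm : 2 ≤ m) (hm₁ : 1 ≤ m₁) (hx : W (i+(m-1)) ≠ 0) :
    cut (k+(m₁-1)) = i+(m-2) ∧ cut (k+m₁) = cut (k+(m₁-1)) + 2 ∧
      W (cut (k+(m₁-1)) + 1) = W (i+(m-1)) := by
  have hgap := cut_gap (k+(m₁-1))
  rw [show k+(m₁-1)+1 = k+m₁ by omega, hck2] at hgap
  have hne : cut (k+(m₁-1)) ≠ i+(m-1) := fun h => hx (h ▸ W_cut _)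
  have hc1 : cut (k+(m₁-1)) = i+(m-2) := by split at hgap <;> omega
  have hc2 : cut (k+m₁) = cut (k+(m₁-1)) + 2 := by rw [hck2]; split at hgap <;> omega
  refine ⟨hc1, hc2, ?_⟩
  rw [hc1, show i+(m-2)+1 = i+(m-1) by omega]

/-! ### Main induction -/

def IHtype (m : ℕ) : Prop := ∀ i,
    ((∀ t, t < m → W (i+t) = W (i+m+t)) → GoodS (pk i m)) ∧
    ((∀ t, t+1 < m → W (i+t) = W (i+m+t)) → W (i+(m-1)) ≠ W (i+m+(m-1)) → GoodN (pk i m))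

lemma CA_Q (m : ℕ) (hm : 2 ≤ m) (IH' : ∀ m', m' < m → 1 ≤ m' → IHtype m')
    (i : ℕ) (hWi : W i = 0) (hq : ∀ t, t < m → W (i+t) = W (i+m+t)) :
    GoodS (pk i m) := by
  have hW0m : W (i+m) = 0 := by
    have := hq 0 (by omega); simp only [Nat.add_zero] at this; omega
  obtain ⟨k, m₁, hck, hck2, hm₁, hm₁lt, hpk⟩ := setup hm hWi hW0m
  rw [hpk]
  by_cases hx : W (i+(m-1)) = 0
  · -- last block of the first copy is "0"
    obtain ⟨hc1, hm₁2, hc3⟩ := last_cut_zero hck hck2 hm hx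
    have A := core_cuts (r := m) hck hck2 hq (by rw [hc1]; omega) hm₁
    have B := core_letters (r := m) hck hck2 hq (by rw [hc1]; omega) hm₁
    have a1 : cut (k+m₁+(m₁-1)) = i+(m-1)+m := by
      rw [A (m₁-1) (by omega), hc1]
    have g2 := gap_ite (k+m₁+(m₁-1))
    rw [a1] at g2
    by_cases hz : W (i+(m-1)+m+1) = 0
    · rw [if_pos hz] at g2
      have hlast : W (k+m₁+(m₁-1)) = 2 := gap1_letter (by rw [g2, a1])
      have hq1 : ∀ t, t < m₁ → W (k+t) = W (k+m₁+t) := by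
        intro t ht
        by_cases h2 : t+2 ≤ m₁
        · exact (B t h2).symm
        · have he : t = m₁ - 1 := by omega
          subst he
          rw [hc3, hlast]
      exact GoodS_Asq ((IH' m₁ hm₁lt hm₁ k).1 hq1)
    · rw [if_neg hz] at g2
      have hlast : W (k+m₁+(m₁-1)) ≠ 2 := by
        intro h2
        have := letter2_gap h2
        rw [g2, a1] at this; omega
      have hN := (IH' m₁ hm₁lt hm₁ k).2 (fun t ht => (B t (by omega)).symm)
        (by rw [hc3]; exact fun h => hlast h.symm)
      exact GoodN_Asq_of_two hN (cnt_pos (show m₁-1 < m₁ by omega) hc3)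
  · -- last block of the first copy is "0x", x ≠ 0
    obtain ⟨hc1, hc2, hc3⟩ := last_cut_nonzero hck hck2 hm hm₁ hx
    have A := core_cuts (r := m) hck hck2 hq (by rw [hc1]; omega) hm₁
    have B := core_letters (r := m) hck hck2 hq (by rw [hc1]; omega) hm₁
    have a1 : cut (k+m₁+(m₁-1)) = i+(m-2)+m := by
      rw [A (m₁-1) (by omega), hc1]
    have hyx : W (i+m+(m-1)) = W (i+(m-1)) := (hq (m-1) (by omega)).symm
    have g2 := gap_ite (k+m₁+(m₁-1))
    rw [a1, show i+(m-2)+m+1 = i+m+(m-1) by omega, hyx, if_neg hx] at g2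
    have hg : cut (k+m₁+(m₁-1)+1) - cut (k+m₁+(m₁-1)) =
        cut (k+(m₁-1)+1) - cut (k+(m₁-1)) := by
      rw [g2, a1, show k+(m₁-1)+1 = k+m₁ by omega, hck2, hc1]
      omega
    have hl : W (cut (k+m₁+(m₁-1)) + 1) = W (cut (k+(m₁-1)) + 1) := by
      rw [a1, hc1, show i+(m-2)+m+1 = i+m+(m-1) by omega,
        show i+(m-2)+1 = i+(m-1) by omega]
      exact hyx
    have hlast : W (k+m₁+(m₁-1)) = W (k+(m₁-1)) := letter_det hg hl
    have hq1 : ∀ t, t < m₁ → W (k+t) = W (k+m₁+t) := by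
      intro t ht
      by_cases h2 : t+2 ≤ m₁
      · exact (B t h2).symm
      · have he : t = m₁ - 1 := by omega
        subst he
        exact hlast.symm
    exact GoodS_Asq ((IH' m₁ hm₁lt hm₁ k).1 hq1)

lemma CA_N (m : ℕ) (hm : 2 ≤ m) (IH' : ∀ m', m' < m → 1 ≤ m' → IHtype m')
    (i : ℕ) (hWi : W i = 0) (hn : ∀ t, t+1 < m → W (i+t) = W (i+m+t))
    (hdef : W (i+(m-1)) ≠ W (i+m+(m-1))) : GoodN (pk i m) := by
  have hW0m : W (i+m) = 0 := by
    have := hn 0 (by omega); simp only [Nat.add_zero] at this; omega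
  obtain ⟨k, m₁, hck, hck2, hm₁, hm₁lt, hpk⟩ := setup hm hWi hW0m
  rw [hpk]
  by_cases hx : W (i+(m-1)) = 0
  · -- impossible: would force "22" at the desubstituted level
    exfalso
    have hy0 : W (i+m+(m-1)) ≠ 0 := fun h => hdef (by rw [hx, h])
    have hpred := (nz_pred hy0).2
    rw [show i+m+(m-1)-1 = i+m+(m-2) by omega] at hpred
    have hm2 : W (i+(m-2)) = 0 := by
      have := hn (m-2) (by omega); rw [this]; exact hpred
    obtain ⟨hc1, hm₁2, hc3⟩ := last_cut_zero hck hck2 hm hx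
    obtain ⟨j2, hj2⟩ := zero_iff_cut.mp hm2
    have hj2lt : j2 < k+(m₁-1) := cut_lt_iff.mp (by rw [hj2, hc1]; omega)
    have hc4 : cut (k+(m₁-2)) = i+(m-2) := by
      have l1 : cut (k+(m₁-2)) < cut (k+(m₁-1)) := cut_lt_iff.mpr (by omega)
      have l2 : cut j2 ≤ cut (k+(m₁-2)) := cut_le_iff.mpr (by omega)
      rw [hj2] at l2; rw [hc1] at l1; omega
    have h2a : W (k+(m₁-2)) = 2 := gap1_letter (by
      rw [show k+(m₁-2)+1 = k+(m₁-1) by omega, hc1, hc4]; omega)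
    have := nz_succ (show W (k+(m₁-2)) ≠ 0 by omega)
    rw [show k+(m₁-2)+1 = k+(m₁-1) by omega] at this
    omega
  · -- defect transfers to the desubstituted level
    obtain ⟨hc1, hc2, hc3⟩ := last_cut_nonzero hck hck2 hm hm₁ hx
    have hmatch' : ∀ t, t < m-1 → W (i+t) = W (i+m+t) := fun t ht => hn t (by omega)
    have A := core_cuts (r := m-1) hck hck2 hmatch' (by rw [hc1]; omega) hm₁
    have B := core_letters (r := m-1) hck hck2 hmatch' (by rw [hc1]; omega) hm₁
    have a1 : cut (k+m₁+(m₁-1)) = i+(m-2)+m := by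
      rw [A (m₁-1) (by omega), hc1]
    have hsl : W (cut (k+m₁+(m₁-1)) + 1) = W (i+m+(m-1)) := by
      rw [a1, show i+(m-2)+m+1 = i+m+(m-1) by omega]
    have hdef1 : W (k+(m₁-1)) ≠ W (k+m₁+(m₁-1)) := by
      intro he
      have h2l := letter_det2 he
      rw [hc3, hsl] at h2l
      exact hdef h2l
    exact GoodN_Asq ((IH' m₁ hm₁lt hm₁ k).2 (fun t ht => (B t (by omega)).symm) hdef1)

theorem main_ind : ∀ m, 1 ≤ m → IHtype m := by
  intro m
  induction m using Nat.strong_induction_on with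
  | _ m IH =>
    intro hm1 i
    rcases Nat.lt_or_ge m 2 with hm | hm
    · -- base case m = 1
      have hm' : m = 1 := by omega
      subst hm'
      constructor
      · intro hq
        have h01 := hq 0 (by omega)
        simp only [Nat.add_zero] at h01
        have hWi : W i = 0 := by
          by_contra h
          have := nz_succ h
          rw [← h01] at this
          exact h this
        exact ⟨0, Or.inl (by rw [pk_one, hWi, Vv_zero]; norm_num)⟩
      · intro _ _
        rcases W_cases i with h|h|h
        · exact Or.inl ⟨0, Or.inl (by rw [pk_one, h, Vv_zero]; norm_num)⟩
        · right; left; rw [pk_one, h]; norm_num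
        · right; right; left; rw [pk_one, h]; norm_num
    · -- inductive step m ≥ 2
      have IH' : ∀ m', m' < m → 1 ≤ m' → IHtype m' := fun m' h h1 => IH m' h h1
      constructor
      · intro hq
        by_cases hWi : W i = 0
        · exact CA_Q m hm IH' i hWi hq
        · obtain ⟨hi1, hip⟩ := nz_pred hWi
          have hWm : W (i+m) ≠ 0 := by
            have := hq 0 (by omega); simp only [Nat.add_zero] at this
            rw [← this]; exact hWi
          obtain ⟨him1, himp⟩ := nz_pred hWm
          have hq' : ∀ t, t < m → W ((i-1)+t) = W ((i-1)+m+t) := by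
            intro t ht
            rcases Nat.eq_zero_or_pos t with rfl | htpos
            · simp only [Nat.add_zero]
              rw [hip, show i-1+m = i+m-1 by omega, himp]
            · have := hq (t-1) (by omega)
              rw [show (i-1)+t = i+(t-1) by omega, show (i-1)+m+t = i+m+(t-1) by omega]
              exact this
          have hS := CA_Q m hm IH' (i-1) hip hq'
          have hrot : pk (i-1) m = pk i m := by
            have h := pk_rot (i := i-1) (m := m) hip
              (by rw [show i-1+m = i+m-1 by omega]; exact himp)
            rw [show i-1+1 = i by omega] at h
            exact h
          rwa [hrot] at hS
      · intro hn hdef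
        by_cases hWi : W i = 0
        · exact CA_N m hm IH' i hWi hn hdef
        · obtain ⟨hi1, hip⟩ := nz_pred hWi
          have hWm : W (i+m) ≠ 0 := by
            have := hn 0 (by omega); simp only [Nat.add_zero] at this
            rw [← this]; exact hWi
          obtain ⟨him1, himp⟩ := nz_pred hWm
          have hq' : ∀ t, t < m → W ((i-1)+t) = W ((i-1)+m+t) := by
            intro t ht
            rcases Nat.eq_zero_or_pos t with rfl | htpos
            · simp only [Nat.add_zero]
              rw [hip, show i-1+m = i+m-1 by omega, himp]
            · have := hn (t-1) (by omega)
              rw [show (i-1)+t = i+(t-1) by omega, show (i-1)+m+t = i+m+(t-1) by omega]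
              exact this
          have hS := CA_Q m hm IH' (i-1) hip hq'
          have hrot : pk (i-1) m = pk i m := by
            have h := pk_rot (i := i-1) (m := m) hip
              (by rw [show i-1+m = i+m-1 by omega]; exact himp)
            rw [show i-1+1 = i by omega] at h
            exact h
          rw [hrot] at hS
          exact Or.inl hS

end TW


/-- Every square in the Tribonacci word has order `T_n` or `T_n + T_{n-1}` for some `n ≥ 2`. -/
theorem tribWord_square_orders (i m : ℕ) (hm : 0 < m)
    (hsq : ∀ t < m, tribWord (i + t) = tribWord (i + m + t)) :
    ∃ n ≥ 2, m = trib n ∨ m = trib n + trib (n - 1) := by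
  exact TW.GoodS_order ((TW.main_ind m hm i).1 hsq)
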